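/- Let Y be a non-negative, non-degenerate real-valued random variable with continuous cumulative distribution function F_Y and 0 < E[Y] < ∞. Then the denominator of the Gini index is strictly positive: 2 E[ Y · F_Y(Y) ] − E[ Y ] > 0; equivalently, ∫_0^1 CAP_{Y,Y}(alpha) d alpha − 1/2 > 0. -/

import Mathlib

open MeasureTheory ProbabilityTheory
open MeasureTheory ProbabilityTheory Set Filter Function
open scoped Topology ENNReal

/-- The cumulative distribution function of a measure on `ℝ`. -/
noncomputable def cdfOf (μ : Measure ℝ) (y : ℝ) : ℝ := (μ (Set.Iic y)).toReal

section GiniAux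
variable {μ : Measure ℝ} [IsProbabilityMeasure μ]


lemma cdfOf_eq_cdf : cdfOf μ = ⇑(cdf μ) := by
  funext x; rw [cdfOf, cdf_eq_real, measureReal_def]

lemma leftLim_cdf (hcont : Continuous (cdf μ)) (a : ℝ) :
    Function.leftLim (⇑(cdf μ)) a = cdf μ a :=
  leftLim_eq_of_tendsto ((hcont.tendsto a).mono_left nhdsWithin_le_nhds)

lemma atom_zero (hcont : Continuous (cdf μ)) (a : ℝ) : μ {a} = 0 := by
  conv_lhs => rw [← measure_cdf μ]
  rw [StieltjesFunction.measure_singleton, leftLim_cdf hcont, sub_self, ENNReal.ofReal_zero]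

lemma level_set_null (hcont : Continuous (cdf μ)) {r : ℝ} (h0 : 0 < r) (h1 : r < 1) :
    μ {y | cdf μ y = r} = 0 := by
  set S : Set ℝ := {y | cdf μ y = r} with hSdef
  rcases S.eq_empty_or_nonempty with hS | hS
  · simp [hS]
  have hSclosed : IsClosed S := isClosed_eq hcont continuous_const
  obtain ⟨b, hb⟩ := eventually_atTop.mp ((tendsto_cdf_atTop μ).eventually_const_lt h1)
  obtain ⟨a, ha⟩ := eventually_atBot.mp ((tendsto_cdf_atBot μ).eventually_lt_const h0)
  have hbdda : BddAbove S := ⟨b, fun y hy => by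
    by_contra hy'; exact absurd (hb y (le_of_not_ge hy')) (by simp [hy.out])⟩
  have hbddb : BddBelow S := ⟨a, fun y hy => by
    by_contra hy'; exact absurd (ha y (le_of_not_ge hy')) (by simp [hy.out])⟩
  have hu : sInf S ∈ S := hSclosed.csInf_mem hS hbddb
  have hv : sSup S ∈ S := hSclosed.csSup_mem hS hbdda
  have hsub : S ⊆ Icc (sInf S) (sSup S) := fun y hy => ⟨csInf_le hbddb hy, le_csSup hbdda hy⟩
  refine measure_mono_null hsub ?_
  conv_lhs => rw [← measure_cdf μ]
  rw [StieltjesFunction.measure_Icc, leftLim_cdf hcont, hu.out, hv.out, sub_self,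
    ENNReal.ofReal_zero]

lemma lintegral_cdf_half (hcont : Continuous (cdf μ)) :
    ∫⁻ y, μ (Iic y) ∂μ = 1/2 := by
  have hmeas : Measurable fun y : ℝ => μ (Iic y) := by
    have : (fun y : ℝ => μ (Iic y)) = fun y => ENNReal.ofReal (cdf μ y) := by
      funext y; rw [ofReal_cdf]
    rw [this]
    exact (ENNReal.continuous_ofReal.comp hcont).measurable
  have hle : ∀ y : ℝ, μ (Iic y) ≤ 1 := fun y => prob_le_one
  -- the two half-plane computations
  have hA : (μ.prod μ) {p : ℝ × ℝ | p.1 ≤ p.2} = ∫⁻ x, μ (Ici x) ∂μ := by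
    rw [Measure.prod_apply (measurableSet_le measurable_fst measurable_snd)]
    rfl
  have hB : (μ.prod μ) {p : ℝ × ℝ | p.2 ≤ p.1} = ∫⁻ x, μ (Iic x) ∂μ := by
    rw [Measure.prod_apply (measurableSet_le measurable_snd measurable_fst)]
    rfl
  have hswap : (μ.prod μ) {p : ℝ × ℝ | p.1 ≤ p.2} = (μ.prod μ) {p : ℝ × ℝ | p.2 ≤ p.1} := by
    conv_lhs => rw [← Measure.prod_swap (μ := μ) (ν := μ)]
    rw [Measure.map_apply measurable_swap (measurableSet_le measurable_fst measurable_snd)]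
    rfl
  have hIci : ∀ x : ℝ, μ (Ici x) = 1 - μ (Iic x) := by
    intro x
    have h1 : μ (Iic x) = μ (Iio x) := by
      refine (measure_congr ?_).symm
      exact Iio_ae_eq_Iic' (atom_zero hcont x)
    rw [h1, ← compl_Iio, measure_compl measurableSet_Iio (measure_ne_top μ _), measure_univ]
  have key : ∫⁻ x, μ (Iic x) ∂μ = 1 - ∫⁻ x, μ (Iic x) ∂μ := by
    have hfin : ∫⁻ x, μ (Iic x) ∂μ ≠ ⊤ :=
      ne_top_of_le_ne_top ENNReal.one_ne_top (le_trans (lintegral_mono hle) (by simp))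
    calc ∫⁻ x, μ (Iic x) ∂μ = ∫⁻ x, μ (Ici x) ∂μ := by rw [← hB, ← hswap, hA]
    _ = ∫⁻ x, (1 - μ (Iic x)) ∂μ := by
        refine lintegral_congr fun x => ?_
        rw [hIci x]
    _ = ∫⁻ x, (1:ℝ≥0∞) ∂μ - ∫⁻ x, μ (Iic x) ∂μ := by
        refine lintegral_sub hmeas hfin (Filter.Eventually.of_forall hle)
    _ = 1 - ∫⁻ x, μ (Iic x) ∂μ := by simp
  set I := ∫⁻ x, μ (Iic x) ∂μ with hI
  have hIle : I ≤ 1 := le_trans (lintegral_mono hle) (by simp)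
  have hIfin : I ≠ ⊤ := ne_top_of_le_ne_top ENNReal.one_ne_top hIle
  have h2 : I + I = 1 := by
    nth_rewrite 1 [key]
    exact tsub_add_cancel_of_le hIle
  have := congrArg ENNReal.toReal h2
  rw [ENNReal.toReal_add hIfin hIfin] at this
  simp at this
  have hIr : I.toReal = 1/2 := by linarith
  rw [← ENNReal.ofReal_toReal hIfin, hIr]
  rw [ENNReal.ofReal_div_of_pos (by norm_num)]
  norm_num

lemma integral_cdf_half (hcont : Continuous (cdf μ)) :
    ∫ y, cdf μ y ∂μ = 1/2 := by
  rw [integral_eq_lintegral_of_nonneg_ae (Filter.Eventually.of_forall (cdf_nonneg μ))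
    hcont.aestronglyMeasurable]
  have : (fun y => ENNReal.ofReal (cdf μ y)) = fun y => μ (Iic y) := by
    funext y; rw [ofReal_cdf]
  rw [this, lintegral_cdf_half hcont]
  simp [ENNReal.toReal_div]

lemma exists_median (hcont : Continuous (cdf μ)) : ∃ c : ℝ, cdf μ c = 1/2 := by
  have h1 : ⇑(cdf μ) ≤ᶠ[atBot] (fun _ => (1:ℝ)/2) :=
    ((tendsto_cdf_atBot μ).eventually_lt_const (by norm_num)).mono fun x hx => hx.le
  have h2 : (fun _ => (1:ℝ)/2) ≤ᶠ[atTop] ⇑(cdf μ) :=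
    ((tendsto_cdf_atTop μ).eventually_const_lt (by norm_num)).mono fun x hx => hx.le
  exact intermediate_value_univ₂_eventually₂ hcont continuous_const h1 h2

end GiniAux

/-- **Strict positivity of the Gini denominator.**
Let `Y` be a non-negative, non-degenerate real-valued random variable with continuous CDF
`F_Y` and `0 < E[Y] < ∞`. Then `2 E[Y · F_Y(Y)] − E[Y] > 0`. -/
theorem gini_denominator_pos
    {Ω : Type*} [MeasureSpace Ω] [IsProbabilityMeasure (ℙ : Measure Ω)]
    (Y : Ω → ℝ) (hYmeas : Measurable Y) (hYnn : ∀ ω, 0 ≤ Y ω)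
    (hYint : Integrable Y ℙ) (hEY : 0 < ∫ ω, Y ω ∂ℙ)
    (hcont : Continuous (cdfOf (Measure.map Y ℙ)))
    (hnondeg : ¬ ∃ c : ℝ, Y =ᵐ[ℙ] fun _ => c) :
    0 < 2 * (∫ ω, Y ω * cdfOf (Measure.map Y ℙ) (Y ω) ∂ℙ) - ∫ ω, Y ω ∂ℙ := by
  set μ := Measure.map Y ℙ with hμ
  haveI hpm : IsProbabilityMeasure μ := Measure.isProbabilityMeasure_map hYmeas.aemeasurable
  have hFeq : cdfOf μ = ⇑(cdf μ) := cdfOf_eq_cdf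
  rw [hFeq] at hcont ⊢
  have hint1 : ∫ ω, Y ω ∂ℙ = ∫ y, y ∂μ :=
    (integral_map hYmeas.aemeasurable aestronglyMeasurable_id).symm
  have hint2 : ∫ ω, Y ω * cdf μ (Y ω) ∂ℙ = ∫ y, y * cdf μ y ∂μ :=
    (integral_map hYmeas.aemeasurable
      ((continuous_id.mul hcont).aestronglyMeasurable)).symm
  rw [hint1, hint2]
  have hInt : Integrable (fun y : ℝ => y) μ :=
    (integrable_map_measure aestronglyMeasurable_id hYmeas.aemeasurable).mpr hYint
  have hIntcdf : Integrable (⇑(cdf μ)) μ := by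
    refine Integrable.mono' (integrable_const 1) hcont.aestronglyMeasurable ?_
    filter_upwards with y
    rw [Real.norm_eq_abs, abs_of_nonneg (cdf_nonneg μ y)]
    exact cdf_le_one μ y
  have hIntyF : Integrable (fun y : ℝ => y * cdf μ y) μ := by
    refine Integrable.mono' hInt.abs ((continuous_id.mul hcont).aestronglyMeasurable) ?_
    filter_upwards with y
    rw [Real.norm_eq_abs, abs_mul]
    exact mul_le_of_le_one_right (abs_nonneg y)
      (abs_le.mpr ⟨by linarith [cdf_nonneg μ y], cdf_le_one μ y⟩)
  obtain ⟨c, hc⟩ := exists_median hcont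
  set g : ℝ → ℝ := fun y => (y - c) * (cdf μ y - 1/2) with hg
  have hexp : g = fun y => y * cdf μ y - (1/2) * y - c * cdf μ y + c * (1/2) := by
    funext y; simp only [hg]; ring
  have i1 : Integrable (fun y : ℝ => y * cdf μ y - (1/2) * y) μ :=
    hIntyF.sub (hInt.const_mul (1/2))
  have i2 : Integrable (fun y : ℝ => y * cdf μ y - (1/2) * y - c * cdf μ y) μ :=
    i1.sub (hIntcdf.const_mul c)
  have hgInt : Integrable g μ := by
    rw [hexp]
    exact i2.add (integrable_const _)
  have key : ∫ y, g y ∂μ = ∫ y, y * cdf μ y ∂μ - (1/2) * ∫ y, y ∂μ := by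
    simp only [hexp]
    rw [integral_add i2 (integrable_const _), integral_sub i1 (hIntcdf.const_mul c),
      integral_sub hIntyF (hInt.const_mul (1/2)),
      integral_const_mul, integral_const_mul, integral_cdf_half hcont, integral_const]
    simp only [measure_univ, probReal_univ, ENNReal.toReal_one, one_smul, smul_eq_mul]
    ring
  have hg_nonneg : ∀ y, 0 ≤ g y := by
    intro y
    rcases le_total y c with h | h
    · refine mul_nonneg_iff.mpr (Or.inr ⟨by linarith, ?_⟩)
      have := monotone_cdf μ h
      rw [hc] at this; linarith
    · refine mul_nonneg (by linarith) ?_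
      have := monotone_cdf μ h
      rw [hc] at this; linarith
  have hpos : 0 < ∫ y, g y ∂μ := by
    rw [integral_pos_iff_support_of_nonneg hg_nonneg hgInt]
    have hnull : μ (Function.support g)ᶜ = 0 := by
      refine measure_mono_null (fun y hy => ?_) (measure_union_null (atom_zero hcont c)
        (level_set_null hcont (r := 1/2) (by norm_num) (by norm_num)))
      simp only [Set.mem_compl_iff, Function.mem_support, not_not, hg] at hy
      rcases mul_eq_zero.mp hy with h | h
      · exact Or.inl (by simp [sub_eq_zero.mp h])
      · exact Or.inr (by simpa [sub_eq_zero] using h)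
    have h1 : (1 : ℝ≥0∞) ≤ μ (Function.support g) + μ (Function.support g)ᶜ := by
      rw [← measure_univ (μ := μ), ← Set.union_compl_self (Function.support g)]
      exact measure_union_le _ _
    rw [hnull, add_zero] at h1
    exact lt_of_lt_of_le (by norm_num) h1
  rw [key] at hpos
  linarith
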